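/- Let F be a field, let A = [[α₁,α₂,α₃,α₄],[β₁,β₂,β₃,β₄]] be a 2×4 matrix over F, and define P(A) to be the 2×2 matrix whose first row is (α₁+β₃, α₂+β₄) and whose second row is (α₁+β₂, α₃+β₄). Then for every invertible 2×2 matrix g over F one has P(g · A · (g⁻¹ ⊗ g⁻¹)) = P(A) · g⁻¹, where ⊗ denotes the Kronecker product of matrices. -/
import Mathlib


open Matrix Kronecker

/-- The matrix of structure constants (MSC) of a 2-dimensional algebra, as a
`2 × (2 × 2)` matrix: the column indexed by `(j,k)` corresponds to the product
`e_j · e_k`, so the columns in order `(0,0), (0,1), (1,0), (1,1)` carry the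
entries `α₁ α₂ α₃ α₄` (first row) and `β₁ β₂ β₃ β₄` (second row). -/
def MSC {F : Type*} [Field F] (a1 a2 a3 a4 b1 b2 b3 b4 : F) :
    Matrix (Fin 2) (Fin 2 × Fin 2) F :=
  Matrix.of fun i j => !![a1, a2, a3, a4; b1, b2, b3, b4] i (finProdFinEquiv j)

/-- `g` is an automorphism matrix of the algebra with MSC `A`:
`g` is invertible and `g • A = A • (g ⊗ g)`. -/
def IsAutoMat {F : Type*} [Field F] (A : Matrix (Fin 2) (Fin 2 × Fin 2) F)
    (g : Matrix (Fin 2) (Fin 2) F) : Prop :=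
  IsUnit g ∧ g * A = A * (g ⊗ₖ g)

/-- `D` is a derivation matrix of the algebra with MSC `A`:
`D • A = A • (D ⊗ I + I ⊗ D)`. -/
def IsDerMat {F : Type*} [Field F] (A : Matrix (Fin 2) (Fin 2 × Fin 2) F)
    (D : Matrix (Fin 2) (Fin 2) F) : Prop :=
  D * A = A * (D ⊗ₖ (1 : Matrix (Fin 2) (Fin 2) F) + (1 : Matrix (Fin 2) (Fin 2) F) ⊗ₖ D)

/-- `P(A)` is the 2×2 matrix whose rows are
`tr̄₁(A) = (α₁+β₃, α₂+β₄)` and `tr̄₂(A) = (α₁+β₂, α₃+β₄)`. -/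
def Pmat {F : Type*} [Field F] (A : Matrix (Fin 2) (Fin 2 × Fin 2) F) :
    Matrix (Fin 2) (Fin 2) F :=
  !![A 0 (0, 0) + A 1 (1, 0), A 0 (0, 1) + A 1 (1, 1);
     A 0 (0, 0) + A 1 (0, 1), A 0 (1, 0) + A 1 (1, 1)]

set_option maxHeartbeats 1000000 in
lemma aux_stmt_0 {F : Type*} [Field F] (a1 a2 a3 a4 b1 b2 b3 b4 p q r s : F)
    (h : p * s - q * r ≠ 0) :
    Pmat (!![p, q; r, s] * MSC a1 a2 a3 a4 b1 b2 b3 b4 *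
        (((p * s - q * r)⁻¹ • !![s, -q; -r, p]) ⊗ₖ ((p * s - q * r)⁻¹ • !![s, -q; -r, p]))) =
      Pmat (MSC a1 a2 a3 a4 b1 b2 b3 b4) * ((p * s - q * r)⁻¹ • !![s, -q; -r, p]) := by
  have he : (p * s - q * r) * (p * s - q * r)⁻¹ = 1 := mul_inv_cancel₀ h
  set A := MSC a1 a2 a3 a4 b1 b2 b3 b4 with hA
  have e1 : A 0 (0,0) = a1 := rfl
  have e2 : A 0 (0,1) = a2 := rfl
  have e3 : A 0 (1,0) = a3 := rfl
  have e4 : A 0 (1,1) = a4 := rfl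
  have f1 : A 1 (0,0) = b1 := rfl
  have f2 : A 1 (0,1) = b2 := rfl
  have f3 : A 1 (1,0) = b3 := rfl
  have f4 : A 1 (1,1) = b4 := rfl
  ext i j
  fin_cases i <;> fin_cases j <;>
    simp only [Pmat, Fintype.sum_prod_type, Matrix.mul_apply, Matrix.kroneckerMap_apply,
      Fin.sum_univ_two, Matrix.smul_apply, smul_eq_mul, Fin.mk_zero, Fin.mk_one,
      Matrix.cons_val', Matrix.cons_val_zero, Matrix.cons_val_one, Matrix.head_cons,
      Matrix.head_fin_const, Matrix.empty_val', Matrix.cons_val_fin_one, Fin.isValue,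
      Matrix.of_apply, e1, e2, e3, e4, f1, f2, f3, f4]
  · linear_combination (((a1 + b3) * s - (a2 + b4) * r) * (p * s - q * r)⁻¹) * he
  · linear_combination ((-(a1 + b3) * q + (a2 + b4) * p) * (p * s - q * r)⁻¹) * he
  · linear_combination (((a1 + b2) * s - (a3 + b4) * r) * (p * s - q * r)⁻¹) * he
  · linear_combination ((-(a1 + b2) * q + (a3 + b4) * p) * (p * s - q * r)⁻¹) * he

theorem stmt_0 {F : Type*} [Field F] (a1 a2 a3 a4 b1 b2 b3 b4 : F)
    (A : Matrix (Fin 2) (Fin 2 × Fin 2) F)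
    (hA : A = MSC a1 a2 a3 a4 b1 b2 b3 b4)
    (g : Matrix (Fin 2) (Fin 2) F) (hg : IsUnit g) :
    Pmat (g * A * (g⁻¹ ⊗ₖ g⁻¹)) = Pmat A * g⁻¹ := by
  subst hA
  have hd : g.det ≠ 0 := ((Matrix.isUnit_iff_isUnit_det g).mp hg).ne_zero
  have hdet : g.det = g 0 0 * g 1 1 - g 0 1 * g 1 0 := Matrix.det_fin_two g
  have hd' : g 0 0 * g 1 1 - g 0 1 * g 1 0 ≠ 0 := hdet ▸ hd
  have hinv : g⁻¹ = (g 0 0 * g 1 1 - g 0 1 * g 1 0)⁻¹ • !![g 1 1, -(g 0 1); -(g 1 0), g 0 0] := by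
    rw [Matrix.inv_def, Matrix.adjugate_fin_two, Ring.inverse_eq_inv, hdet]
  rw [hinv]
  conv_lhs => rw [Matrix.eta_fin_two g]
  exact aux_stmt_0 a1 a2 a3 a4 b1 b2 b3 b4 (g 0 0) (g 0 1) (g 1 0) (g 1 1) hd'
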